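/- Under the hypotheses of the lapse deformation: if 0 < 2r^aD_ak + k² + k_{ab}² < βk² on [0,ε) and ⁽³⁾R ≥ 0, and the deformed Ricci scalar satisfies ⁽³⁾R̂ = ⁽³⁾R + (1-u⁻²)(2r^aD_ak + k² + k_{ab}²) + 2u⁻²k²·∂ᵣlog u with u(r) = 1 - exp(-Cδ/(ε-r)), then choosing C > βδ makes ⁽³⁾R̂ > 0 on [0,ε). -/

import Mathlib

open Real

lemma aux_pos (w x P K L Cd β t R3 : ℝ) (hw : 1 < w) (hx0 : 0 < x)
    (hP0 : 0 < P) (hPβ : P < β * K) (hK : 0 < K) (hR3 : 0 ≤ R3)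
    (hCd : β * t^2 < Cd) (ht : 0 < t)
    (hwx : w * (1 - x) = 1)
    (hL : L * t^2 = w * Cd * x) :
    R3 + (1 - w^2) * P + 2 * w^2 * K * L > 0 := by
  have hβ : 0 < β := by nlinarith
  have hw0 : 0 < w := by linarith
  -- w - 1 = w * x
  have h1 : w - 1 = w * x := by nlinarith
  -- key: 2 w^2 * L > (w^2 - 1) * β
  have hkey : 2 * w^2 * L > (w^2 - 1) * β := by
    have ht2 : 0 < t^2 := by positivity
    rw [gt_iff_lt, ← sub_pos]
    have h2 : (2 * w^2 * L - (w^2 - 1) * β) * t^2 =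
        2 * w^3 * Cd * x - (w - 1) * (w + 1) * β * t^2 := by
      nlinarith [hL]
    have h3 : 2 * w^3 * Cd * x - (w - 1) * (w + 1) * β * t^2 > 0 := by
      rw [h1]
      have h4 : 2 * w^2 * Cd > (w + 1) * (β * t^2) := by
        nlinarith [mul_pos (show (0:ℝ) < 2*w^2 by nlinarith) (sub_pos.mpr hCd),
          mul_nonneg (mul_nonneg (by linarith : (0:ℝ) ≤ 2*w+1) (by linarith : (0:ℝ) ≤ w-1)) (mul_pos hβ (by positivity : (0:ℝ) < t^2)).le]
      nlinarith [mul_pos hw0 hx0]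
    nlinarith
  have h5 : (w^2 - 1) * P < (w^2 - 1) * (β * K) := by
    have : 0 < w^2 - 1 := by nlinarith
    nlinarith
  nlinarith [mul_pos hK (sub_pos.mpr hkey)]


theorem deformed_ricci_positive (C δ ε β : ℝ) (hδ : δ > 0) (hε : ε > 0)
    (hεδ : ε < δ) (hβ : β > 0) (hC : C > β * δ)
    (k rDk kab2 R3 Rhat : ℝ → ℝ)
    (u : ℝ → ℝ) (hu : u = fun r : ℝ => 1 - Real.exp (-(C * δ) / (ε - r)))
    (logu' : ℝ → ℝ)
    (hlogu' : logu' = fun r : ℝ =>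
      (u r)⁻¹ * (C * δ / (ε - r)^2) * Real.exp (-(C * δ) / (ε - r)))
    (hk : ∀ r ∈ Set.Ico (0:ℝ) ε, k r > 0)
    (hbound : ∀ r ∈ Set.Ico (0:ℝ) ε,
      0 < 2 * rDk r + (k r)^2 + kab2 r ∧
      2 * rDk r + (k r)^2 + kab2 r < β * (k r)^2)
    (hR3 : ∀ r ∈ Set.Ico (0:ℝ) ε, R3 r ≥ 0)
    (hRhat : ∀ r ∈ Set.Ico (0:ℝ) ε,
      Rhat r = R3 r + (1 - ((u r)⁻¹)^2) * (2 * rDk r + (k r)^2 + kab2 r)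
        + 2 * ((u r)⁻¹)^2 * (k r)^2 * logu' r) :
    ∀ r ∈ Set.Ico (0:ℝ) ε, Rhat r > 0 := by
  intro r hr
  obtain ⟨hr0, hrε⟩ := hr
  have ht : 0 < ε - r := by linarith
  have hCpos : 0 < C := by nlinarith
  have hCδ : 0 < C * δ := by positivity
  set x := Real.exp (-(C * δ) / (ε - r)) with hxdef
  have hx0 : 0 < x := Real.exp_pos _
  have hx1 : x < 1 := by
    apply Real.exp_lt_one_iff.mpr
    exact div_neg_of_neg_of_pos (by linarith) ht
  have hur : u r = 1 - x := by rw [hu]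
  have hu0 : 0 < u r := by rw [hur]; linarith
  have hu1 : u r < 1 := by rw [hur]; linarith
  have hw : 1 < (u r)⁻¹ := by
    rw [lt_inv_comm₀ one_pos hu0]
    simpa using hu1
  have hwx : (u r)⁻¹ * (1 - x) = 1 := by
    rw [← hur]; exact inv_mul_cancel₀ hu0.ne'
  have hL : logu' r * (ε - r)^2 = (u r)⁻¹ * (C * δ) * x := by
    rw [hlogu']
    field_simp
    rw [hxdef]; ring_nf
  have hCd : β * (ε - r)^2 < C * δ := by
    have h1 : (ε - r)^2 < δ^2 := by nlinarith
    nlinarith [mul_lt_mul_of_pos_left h1 hβ, mul_lt_mul_of_pos_right hC hδ]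
  obtain ⟨hP0, hPβ⟩ := hbound r ⟨hr0, hrε⟩
  have hK : 0 < (k r)^2 := pow_pos (hk r ⟨hr0, hrε⟩) 2
  rw [hRhat r ⟨hr0, hrε⟩]
  exact aux_pos ((u r)⁻¹) x (2 * rDk r + (k r)^2 + kab2 r) ((k r)^2) (logu' r)
    (C * δ) β (ε - r) (R3 r) hw hx0 hP0 hPβ hK (hR3 r ⟨hr0, hrε⟩) hCd ht hwx hL
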